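/- Let d ≥ 1, Ω ∈ ℝ, H : ℝᵈ → ℝ continuously differentiable, and K⁻¹ : ℝᵈ → Matrix (Fin d) (Fin d) ℝ continuous, and assume the extended vector field F : (ℝᵈ)ᵈ → (ℝᵈ)ᵈ, F(P₁,…,P_d)_k = K⁻¹(P_k)·∇_{P_k} H̄(P₁,…,P_d), is Lipschitz continuous, where H̄ = Σ_{i=1}^d H_i + Ω·H_c is the augmented Hamiltonian built from the cyclic mixed Hamiltonians H_i and the constraint H_c = Σ_{1≤i<j≤d} ‖P_i - P_j‖²/2. Let P : [0,T] → ℝᵈ solve P' = K⁻¹(P)∇H(P) with P(0) = P₀, and let (P₁,…,P_d) : [0,T] → (ℝᵈ)ᵈ solve the extended system with P_k(0) = P₀ for every k. Then P_k(t) = P(t) for all k ∈ {1,…,d} and all t ∈ [0,T]. -/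

import Mathlib

open Matrix
open scoped BigOperators

/-- The i-th mixed Hamiltonian H_i(P₁,…,P_d) := H(x₁,…,x_d) where x_j := p_{σ(i,j),j}
and σ(i,j) is the unique index congruent to d + j - i modulo d (in 0-based indexing on
`Fin d` this is just j - i computed modulo d). -/
noncomputable def mixedHam (d : ℕ) (H : (Fin d → ℝ) → ℝ)
    (i : Fin d) (Z : Fin d → Fin d → ℝ) : ℝ :=
  H (fun j => Z (j - i) j)

/-- The constraint H_c := Σ_{i<j} ‖P_i - P_j‖₂²/2 (Euclidean 2-norm). -/
noncomputable def constraintHam (d : ℕ) (Z : Fin d → Fin d → ℝ) : ℝ :=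
  ∑ i : Fin d, ∑ j : Fin d,
    if i < j then (∑ l : Fin d, (Z i l - Z j l) ^ 2) / 2 else 0

/-- The augmented Hamiltonian H̄ := Σ_i H_i + Ω·H_c. -/
noncomputable def augHam (d : ℕ) (Ω : ℝ) (H : (Fin d → ℝ) → ℝ)
    (Z : Fin d → Fin d → ℝ) : ℝ :=
  (∑ i : Fin d, mixedHam d H i Z) + Ω * constraintHam d Z

/-- Gradient of H, expressed coordinatewise via partial derivatives. -/
noncomputable def gradVec (d : ℕ) (H : (Fin d → ℝ) → ℝ) (z : Fin d → ℝ) : Fin d → ℝ :=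
  fun j => fderiv ℝ H z (Pi.single j 1)


section Aux

open ContinuousLinearMap in
/-- At a diagonal point, the partial gradient of the augmented Hamiltonian in the k-th block
equals the gradient of H. -/
lemma augHam_fderiv_diag (d : ℕ) [NeZero d] (Ω : ℝ) (H : (Fin d → ℝ) → ℝ)
    (hH : ContDiff ℝ 1 H) (z : Fin d → ℝ) (k j : Fin d) :
    fderiv ℝ (augHam d Ω H) (fun _ => z) (Pi.single k (Pi.single j 1))
      = fderiv ℝ H z (Pi.single j 1) := by
  set Zd : Fin d → Fin d → ℝ := fun _ => z with hZd
  -- the linear "cyclic selection" maps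
  set L : Fin d → ((Fin d → Fin d → ℝ) →L[ℝ] (Fin d → ℝ)) :=
    fun i => ContinuousLinearMap.pi
      (fun j' => (ContinuousLinearMap.proj j').comp
        (ContinuousLinearMap.proj (R := ℝ) (φ := fun _ : Fin d => Fin d → ℝ) (j' - i))) with hLdef
  have hLapp : ∀ i (Z : Fin d → Fin d → ℝ), L i Z = fun j' => Z (j' - i) j' := fun _ _ => rfl
  have hLd : ∀ i, L i Zd = z := fun i => rfl
  -- derivative of each mixed Hamiltonian at the diagonal point
  have hmix : ∀ i : Fin d,
      HasFDerivAt (mixedHam d H i) ((fderiv ℝ H z).comp (L i)) Zd := by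
    intro i
    have h1 : HasFDerivAt H (fderiv ℝ H z) z :=
      ((hH.differentiable one_ne_zero) z).hasFDerivAt
    have h2 : HasFDerivAt (L i) (L i) Zd := (L i).hasFDerivAt
    have h1' : HasFDerivAt H (fderiv ℝ H z) ((L i) Zd) := hLd i ▸ h1
    exact h1'.comp Zd h2
  -- derivative of the constraint at the diagonal point is zero
  have hcon : HasFDerivAt (constraintHam d) (0 : (Fin d → Fin d → ℝ) →L[ℝ] ℝ) Zd := by
    have hterm : ∀ (i j' : Fin d),
        HasFDerivAt (fun Z : Fin d → Fin d → ℝ =>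
          if i < j' then (∑ l : Fin d, (Z i l - Z j' l) ^ 2) / 2 else 0)
          (0 : (Fin d → Fin d → ℝ) →L[ℝ] ℝ) Zd := by
      intro i j'
      by_cases h : i < j'
      · simp only [if_pos h]
        have hsq : ∀ l : Fin d,
            HasFDerivAt (fun Z : Fin d → Fin d → ℝ => (Z i l - Z j' l) ^ 2)
              (0 : (Fin d → Fin d → ℝ) →L[ℝ] ℝ) Zd := by
          intro l
          have hlin : HasFDerivAt (fun Z : Fin d → Fin d → ℝ => Z i l - Z j' l)
              (((ContinuousLinearMap.proj l).comp
                  (ContinuousLinearMap.proj (R := ℝ) (φ := fun _ : Fin d => Fin d → ℝ) i)) -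
                ((ContinuousLinearMap.proj l).comp
                  (ContinuousLinearMap.proj (R := ℝ) (φ := fun _ : Fin d => Fin d → ℝ) j'))) Zd := by
            exact (((ContinuousLinearMap.proj l).comp
              (ContinuousLinearMap.proj (R := ℝ) (φ := fun _ : Fin d => Fin d → ℝ) i)).hasFDerivAt.sub
              ((ContinuousLinearMap.proj l).comp
              (ContinuousLinearMap.proj (R := ℝ) (φ := fun _ : Fin d => Fin d → ℝ) j')).hasFDerivAt)
          have hm := hlin.fun_mul hlin
          have hz : Zd i l - Zd j' l = 0 := by simp [hZd]
          rw [hz] at hm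
          simp only [zero_smul, add_zero, zero_add] at hm
          have : (fun Z : Fin d → Fin d → ℝ => (Z i l - Z j' l) ^ 2)
              = fun Z : Fin d → Fin d → ℝ => (Z i l - Z j' l) * (Z i l - Z j' l) := by
            funext Z; ring
          rw [this]
          simpa using hm
        have hsum := HasFDerivAt.sum (fun l (_ : l ∈ Finset.univ) => hsq l)
        have := hsum.const_mul (2⁻¹ : ℝ)
        simp only [Finset.sum_const, smul_zero, smul_eq_mul, mul_zero] at this ⊢
        have heq : (fun Z : Fin d → Fin d → ℝ => (∑ l : Fin d, (Z i l - Z j' l) ^ 2) / 2)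
            = fun Z : Fin d → Fin d → ℝ => (2⁻¹ : ℝ) * ∑ l : Fin d, (Z i l - Z j' l) ^ 2 := by
          funext Z; ring
        rw [heq]
        simpa using this
      · simp only [if_neg h]
        exact hasFDerivAt_const 0 Zd
    have h1 : ∀ i : Fin d, HasFDerivAt (fun Z : Fin d → Fin d → ℝ =>
        ∑ j' : Fin d, if i < j' then (∑ l : Fin d, (Z i l - Z j' l) ^ 2) / 2 else 0)
        (0 : (Fin d → Fin d → ℝ) →L[ℝ] ℝ) Zd := by
      intro i
      have := HasFDerivAt.fun_sum (fun j' (_ : j' ∈ Finset.univ) => hterm i j')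
      simpa using this
    have := HasFDerivAt.fun_sum (fun i (_ : i ∈ Finset.univ) => h1 i)
    simp only [Finset.sum_const_zero] at this
    exact this
  -- derivative of the augmented Hamiltonian
  have haug : HasFDerivAt (augHam d Ω H)
      (∑ i : Fin d, (fderiv ℝ H z).comp (L i)) Zd := by
    have hs := HasFDerivAt.fun_sum (fun i (_ : i ∈ Finset.univ) => hmix i)
    have hc := hcon.const_mul Ω
    have := hs.fun_add hc
    simp only [smul_zero, add_zero] at this
    exact this
  rw [haug.fderiv]
  -- evaluate the sum of compositions at the basis direction
  have hval : ∀ i : Fin d,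
      L i (Pi.single k (Pi.single j 1)) =
        if j - i = k then Pi.single j (1 : ℝ) else 0 := by
    intro i
    rw [hLapp]
    by_cases hik : j - i = k
    · simp only [if_pos hik]
      funext j'
      by_cases hj' : j' - i = k
      · have hjj' : j' = j := by
          have := hj'.trans hik.symm
          have h2 : j' - i + i = j - i + i := by rw [this]
          rwa [sub_add_cancel, sub_add_cancel] at h2
        subst hjj'
        rw [hj', Pi.single_eq_same, Pi.single_eq_same]
      · have hjj' : j' ≠ j := fun hc => hj' (hc ▸ hik)
        simp [Pi.single_apply, hj', hjj']
    · simp only [if_neg hik]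
      funext j'
      by_cases hj' : j' - i = k
      · have hjj' : j' ≠ j := fun hc => hik (hc ▸ hj')
        simp [Pi.single_apply, hj', hjj']
      · simp [Pi.single_apply, hj']
  rw [ContinuousLinearMap.sum_apply]
  simp only [ContinuousLinearMap.comp_apply, hval]
  rw [Finset.sum_eq_single (j - k)]
  · rw [if_pos (sub_sub_cancel j k)]
  · intro i _ hi
    rw [if_neg, map_zero]
    intro hc
    exact hi (by rw [← hc, sub_sub_cancel])
  · intro h
    exact absurd (Finset.mem_univ _) h

end Aux

/-- If the extended vector field F, F(P₁,…,P_d)_k = K⁻¹(P_k)·∇_{P_k}H̄(P₁,…,P_d), is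
Lipschitz, P solves the original system P' = K⁻¹(P)·∇H(P) on [0,T] with P(0) = P₀, and
(P₁,…,P_d) solves the extended system on [0,T] with P_k(0) = P₀ for every k, then
P_k(t) = P(t) for all k and all t ∈ [0,T]. -/
theorem extended_solution_eq_original
    (d : ℕ) [NeZero d] (Ω : ℝ) (T : ℝ) (hT : 0 ≤ T)
    (H : (Fin d → ℝ) → ℝ) (hH : ContDiff ℝ 1 H)
    (Kinv : (Fin d → ℝ) → Matrix (Fin d) (Fin d) ℝ) (hK : Continuous Kinv)
    (F : (Fin d → Fin d → ℝ) → (Fin d → Fin d → ℝ))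
    (hF : ∀ Z : Fin d → Fin d → ℝ, ∀ k : Fin d,
      F Z k = (Kinv (Z k)).mulVec
        (fun j => fderiv ℝ (augHam d Ω H) Z (Pi.single k (Pi.single j 1))))
    (hLip : ∃ L : NNReal, LipschitzWith L F)
    (P : ℝ → Fin d → ℝ) (P₀ : Fin d → ℝ)
    (hP : ∀ t ∈ Set.Icc 0 T, HasDerivWithinAt P
      ((Kinv (P t)).mulVec (gradVec d H (P t))) (Set.Icc 0 T) t)
    (hP0 : P 0 = P₀)
    (Ps : ℝ → Fin d → Fin d → ℝ)
    (hPs : ∀ t ∈ Set.Icc 0 T, HasDerivWithinAt Ps (F (Ps t)) (Set.Icc 0 T) t)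
    (hPs0 : ∀ k : Fin d, Ps 0 k = P₀) :
    ∀ k : Fin d, ∀ t ∈ Set.Icc 0 T, Ps t k = P t := by
  -- the diagonal curve
  set Q : ℝ → Fin d → Fin d → ℝ := fun t _ => P t with hQ
  -- Q solves the extended system
  have hQ' : ∀ t ∈ Set.Icc 0 T, HasDerivWithinAt Q (F (Q t)) (Set.Icc 0 T) t := by
    intro t ht
    have hFQ : F (Q t) = fun _ => (Kinv (P t)).mulVec (gradVec d H (P t)) := by
      funext k
      rw [hF]
      have hgr : (fun j => fderiv ℝ (augHam d Ω H) (Q t) (Pi.single k (Pi.single j 1)))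
          = gradVec d H (P t) := by
        funext j
        exact augHam_fderiv_diag d Ω H hH (P t) k j
      rw [hgr]
    rw [hFQ, hasDerivWithinAt_pi]
    intro k
    exact hP t ht
  obtain ⟨Lc, hLc⟩ := hLip
  have hPscont : ContinuousOn Ps (Set.Icc 0 T) :=
    fun t ht => (hPs t ht).continuousWithinAt
  have hQcont : ContinuousOn Q (Set.Icc 0 T) := by
    have hPc : ContinuousOn P (Set.Icc 0 T) := fun t ht => (hP t ht).continuousWithinAt
    exact continuousOn_pi.2 fun _ => hPc
  have key : Set.EqOn Ps Q (Set.Icc 0 T) := by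
    apply ODE_solution_unique_of_mem_Icc_right
      (v := fun _ => F) (s := fun _ => Set.univ) (K := Lc)
      (fun _ _ => hLc.lipschitzOnWith) hPscont ?_ (fun _ _ => trivial) hQcont ?_
      (fun _ _ => trivial) ?_
    · intro t ht
      exact (hPs t (Set.Ico_subset_Icc_self ht)).mono_of_mem_nhdsWithin
        (Icc_mem_nhdsGE_of_mem ht)
    · intro t ht
      exact (hQ' t (Set.Ico_subset_Icc_self ht)).mono_of_mem_nhdsWithin
        (Icc_mem_nhdsGE_of_mem ht)
    · funext k
      exact (hPs0 k).trans hP0.symm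
  intro k t ht
  have := key ht
  rw [this]
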